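/- arXiv:1109.3282 — 2 statements merged into one kernel-verified Lean document; each statement's English description precedes it below -/
import Mathlib

section
/- Let G = (V, E) be a graph with a linear order < on E, F = (V, A_f) a spanning forest of G, A_i ⊆ E_i(F) a set of internally active edges, A_e ⊆ E_e(F) a set of externally active edges, and A = (A_f \ A_i) ∪ A_e. Then the spanning subgraph (V, A) satisfies |A_i| = k((V,A)) − k(G) and |A_e| = |A| − |V| + k((V,A)), where k denotes the number of connected components. -/
open Finset

attribute [local instance] Classical.propDecidable

/-- A multigraph on vertex type `V` with edge index type `E` is given by a map
`ends : E → Sym2 V` (loops and parallel edges are allowed).  For an edge subset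
`A ⊆ E`, `edgeGraph ends A` is the simple graph on `V` whose adjacency is
witnessed by some edge of `A`; it determines the connected components of the
spanning subgraph `(V, A)`. -/
def edgeGraph {V E : Type} (ends : E → Sym2 V) (A : Finset E) : SimpleGraph V where
  Adj a b := a ≠ b ∧ ∃ e ∈ A, ends e = s(a, b)
  symm := by
    constructor
    rintro a b ⟨hab, e, he, hs⟩
    exact ⟨Ne.symm hab, e, he, by rw [hs, Sym2.eq_swap]⟩
  loopless := by constructor; rintro a ⟨h, -⟩; exact h rfl

/-- `kc ends A` is the number of connected components of the spanning subgraph `(V, A)`. -/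
noncomputable def kc {V E : Type} (ends : E → Sym2 V) (A : Finset E) : ℕ :=
  Nat.card (edgeGraph ends A).ConnectedComponent

/-- `(V, A)` is a spanning forest of `(V, E)`: it is a forest
(`|A| + k((V,A)) = |V|`, which rules out loops, parallel edges and cycles)
with as many connected components as the whole graph. -/
def IsSpanningForest {V E : Type} [Fintype V] [Fintype E] (ends : E → Sym2 V)
    (A : Finset E) : Prop :=
  A.card + kc ends A = Fintype.card V ∧ kc ends A = kc ends Finset.univ

/-- `F - e + f`. -/
def swapEdge {E : Type} [DecidableEq E] (A : Finset E) (e f : E) : Finset E :=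
  insert f (A.erase e)

/-- `e` is internally active in the spanning forest `(V, A)`. -/
def InternallyActive {V E : Type} [Fintype V] [Fintype E] [DecidableEq E] [LinearOrder E]
    (ends : E → Sym2 V) (A : Finset E) (e : E) : Prop :=
  e ∈ A ∧ ¬ ∃ f, f ∉ A ∧ e < f ∧ IsSpanningForest ends (swapEdge A e f)

/-- `f` is externally active in the spanning forest `(V, A)`. -/
def ExternallyActive {V E : Type} [Fintype V] [Fintype E] [DecidableEq E] [LinearOrder E]
    (ends : E → Sym2 V) (A : Finset E) (f : E) : Prop :=
  f ∉ A ∧ ¬ ∃ e, e ∈ A ∧ f < e ∧ IsSpanningForest ends (swapEdge A e f)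

/-- The set `E_i(F)` of internally active edges of the spanning forest `F = (V, A)`. -/
noncomputable def intAct {V E : Type} [Fintype V] [Fintype E] [DecidableEq E] [LinearOrder E]
    (ends : E → Sym2 V) (A : Finset E) : Finset E :=
  Finset.univ.filter (InternallyActive ends A)

/-- The set `E_e(F)` of externally active edges of the spanning forest `F = (V, A)`. -/
noncomputable def extAct {V E : Type} [Fintype V] [Fintype E] [DecidableEq E] [LinearOrder E]
    (ends : E → Sym2 V) (A : Finset E) : Finset E :=
  Finset.univ.filter (ExternallyActive ends A)

section ActivityAux
set_option linter.unusedSectionVars false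

open SimpleGraph

variable {V E : Type} [Fintype V] [DecidableEq E] (ends : E → Sym2 V)

/-- Reachability in the spanning subgraph `(V, A)`. -/
abbrev Rch (A : Finset E) (u v : V) : Prop := (edgeGraph ends A).Reachable u v

lemma edgeGraph_mono {A B : Finset E} (h : A ⊆ B) : edgeGraph ends A ≤ edgeGraph ends B := by
  rintro a b ⟨hab, e, he, hs⟩
  exact ⟨hab, e, h he, hs⟩

lemma ends_exists (f : E) : ∃ x y : V, ends f = s(x, y) :=
  Sym2.ind (fun x y => ⟨x, y, rfl⟩) (ends f)

/-- The natural map on connected components induced by enlarging the edge set. -/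
noncomputable def ccMap {A B : Finset E} (h : A ⊆ B) :
    (edgeGraph ends A).ConnectedComponent → (edgeGraph ends B).ConnectedComponent :=
  SimpleGraph.ConnectedComponent.lift (edgeGraph ends B).connectedComponentMk
    (fun _ _ p _ => SimpleGraph.ConnectedComponent.eq.2
      (p.reachable.mono (edgeGraph_mono ends h)))

@[simp] lemma ccMap_mk {A B : Finset E} (h : A ⊆ B) (v : V) :
    ccMap ends h ((edgeGraph ends A).connectedComponentMk v)
      = (edgeGraph ends B).connectedComponentMk v :=
  SimpleGraph.ConnectedComponent.lift_mk

lemma kc_mono {A B : Finset E} (h : A ⊆ B) : kc ends B ≤ kc ends A := by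
  apply Nat.card_le_card_of_surjective (ccMap ends h)
  intro c
  induction c using SimpleGraph.ConnectedComponent.ind with
  | _ v => exact ⟨(edgeGraph ends A).connectedComponentMk v, ccMap_mk ends h v⟩

lemma kc_empty : kc ends (∅ : Finset E) = Fintype.card V := by
  have : Nat.card V = Fintype.card V := Nat.card_eq_fintype_card
  rw [← this, kc]
  symm
  apply Nat.card_eq_of_bijective (edgeGraph ends (∅ : Finset E)).connectedComponentMk
  constructor
  · intro u v h
    obtain ⟨w⟩ := SimpleGraph.ConnectedComponent.eq.1 h
    cases w with
    | nil => rfl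
    | cons h p => exact absurd h.2 (by simp)
  · intro c
    induction c using SimpleGraph.ConnectedComponent.ind with
    | _ v => exact ⟨v, rfl⟩

/-- The key walk decomposition: any reachability in `A + f` factors through
reachability in `A` possibly using the edge `f` once. -/
lemma reach_insert {A : Finset E} {f : E} {x y : V} (hf : ends f = s(x, y)) {u v : V}
    (h : Rch ends (insert f A) u v) :
    Rch ends A u v ∨ (Rch ends A u x ∧ Rch ends A y v) ∨ (Rch ends A u y ∧ Rch ends A x v) := by
  obtain ⟨w⟩ := h
  induction w with
  | nil => exact Or.inl (SimpleGraph.Reachable.refl _)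
  | @cons a b c hadj p ih =>
    obtain ⟨hne, e, he, hs⟩ := hadj
    rcases Finset.mem_insert.1 he with rfl | heA
    · rw [hf] at hs
      rcases Sym2.eq_iff.1 hs with ⟨rfl, rfl⟩ | ⟨rfl, rfl⟩
      · -- a = x, b = y
        rcases ih with h1 | ⟨h2, h3⟩ | ⟨h2, h3⟩
        · exact Or.inr (Or.inl ⟨SimpleGraph.Reachable.refl _, h1⟩)
        · exact Or.inr (Or.inl ⟨SimpleGraph.Reachable.refl _, h3⟩)
        · exact Or.inl h3
      · -- a = y, b = x
        rcases ih with h1 | ⟨h2, h3⟩ | ⟨h2, h3⟩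
        · exact Or.inr (Or.inr ⟨SimpleGraph.Reachable.refl _, h1⟩)
        · exact Or.inl h3
        · exact Or.inr (Or.inr ⟨SimpleGraph.Reachable.refl _, h3⟩)
    · have hab : Rch ends A a b := SimpleGraph.Adj.reachable ⟨hne, e, heA, hs⟩
      rcases ih with h1 | ⟨h2, h3⟩ | ⟨h2, h3⟩
      · exact Or.inl (hab.trans h1)
      · exact Or.inr (Or.inl ⟨hab.trans h2, h3⟩)
      · exact Or.inr (Or.inr ⟨hab.trans h2, h3⟩)

/-- Adding an edge whose endpoints are already connected does not change `kc`. -/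
lemma kc_insert_of_reach {A : Finset E} {f : E} {x y : V} (hf : ends f = s(x, y))
    (hxy : Rch ends A x y) : kc ends (insert f A) = kc ends A := by
  refine le_antisymm (kc_mono ends (Finset.subset_insert f A)) ?_
  apply Nat.card_le_card_of_injective (ccMap ends (Finset.subset_insert f A))
  intro c d
  refine SimpleGraph.ConnectedComponent.ind₂ ?_ c d
  intro p q h
  rw [ccMap_mk, ccMap_mk] at h
  apply SimpleGraph.ConnectedComponent.eq.2
  rcases reach_insert ends hf (SimpleGraph.ConnectedComponent.eq.1 h) with
    h1 | ⟨h2, h3⟩ | ⟨h2, h3⟩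
  · exact h1
  · exact (h2.trans hxy).trans h3
  · exact (h2.trans hxy.symm).trans h3

/-- Adding an edge whose endpoints are not connected decreases `kc` by exactly one. -/
lemma kc_insert_of_not_reach {A : Finset E} {f : E} {x y : V} (hf : ends f = s(x, y))
    (hxy : ¬ Rch ends A x y) : kc ends A = kc ends (insert f A) + 1 := by
  classical
  have hxney : x ≠ y := fun h => hxy (h ▸ SimpleGraph.Reachable.refl x)
  have hadj : (edgeGraph ends (insert f A)).Adj x y :=
    ⟨hxney, f, Finset.mem_insert_self f A, hf⟩
  have hmkxy : (edgeGraph ends A).connectedComponentMk x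
      ≠ (edgeGraph ends A).connectedComponentMk y :=
    fun h => hxy (SimpleGraph.ConnectedComponent.eq.1 h)
  let θ : (edgeGraph ends A).ConnectedComponent →
      (edgeGraph ends (insert f A)).ConnectedComponent ⊕ Unit :=
    fun c => if c = (edgeGraph ends A).connectedComponentMk y then Sum.inr ()
      else Sum.inl (ccMap ends (Finset.subset_insert f A) c)
  have hbij : Function.Bijective θ := by
    constructor
    · intro c d
      refine SimpleGraph.ConnectedComponent.ind₂ ?_ c d
      intro p q h
      by_cases hp : (edgeGraph ends A).connectedComponentMk p
          = (edgeGraph ends A).connectedComponentMk y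
      · by_cases hq : (edgeGraph ends A).connectedComponentMk q
            = (edgeGraph ends A).connectedComponentMk y
        · rw [hp, hq]
        · simp only [θ, if_pos hp, if_neg hq] at h
          exact absurd h (by simp)
      · by_cases hq : (edgeGraph ends A).connectedComponentMk q
            = (edgeGraph ends A).connectedComponentMk y
        · simp only [θ, if_neg hp, if_pos hq] at h
          exact absurd h (by simp)
        · simp only [θ, if_neg hp, if_neg hq, ccMap_mk] at h
          have h' := Sum.inl.inj h
          apply SimpleGraph.ConnectedComponent.eq.2
          rcases reach_insert ends hf (SimpleGraph.ConnectedComponent.eq.1 h') with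
            h1 | ⟨h2, h3⟩ | ⟨h2, h3⟩
          · exact h1
          · exact absurd (SimpleGraph.ConnectedComponent.eq.2 h3.symm) hq
          · exact absurd (SimpleGraph.ConnectedComponent.eq.2 h2) hp
    · rintro (c | ⟨⟩)
      · induction c using SimpleGraph.ConnectedComponent.ind with
        | _ u =>
          by_cases hu : (edgeGraph ends A).connectedComponentMk u
              = (edgeGraph ends A).connectedComponentMk y
          · refine ⟨(edgeGraph ends A).connectedComponentMk x, ?_⟩
            simp only [θ, if_neg hmkxy, ccMap_mk]
            congr 1
            apply SimpleGraph.ConnectedComponent.eq.2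
            have huy : Rch ends A u y := SimpleGraph.ConnectedComponent.eq.1 hu
            exact hadj.reachable.trans
              (huy.mono (edgeGraph_mono ends (Finset.subset_insert f A))).symm
          · exact ⟨(edgeGraph ends A).connectedComponentMk u,
              by simp only [θ, if_neg hu, ccMap_mk]⟩
      · exact ⟨(edgeGraph ends A).connectedComponentMk y, by simp only [θ, if_pos rfl]⟩
  have hcard := Nat.card_eq_of_bijective θ hbij
  rw [kc, kc, hcard, Nat.card_sum]
  simp

lemma kc_le_insert (A : Finset E) (f : E) : kc ends A ≤ kc ends (insert f A) + 1 := by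
  obtain ⟨x, y, hf⟩ := ends_exists ends f
  by_cases h : Rch ends A x y
  · rw [kc_insert_of_reach ends hf h]; omega
  · exact le_of_eq (kc_insert_of_not_reach ends hf h)

lemma kc_ge [DecidableEq E] (A : Finset E) : Fintype.card V ≤ A.card + kc ends A := by
  classical
  induction A using Finset.induction with
  | empty => rw [kc_empty]; simp
  | @insert f A hf ih =>
    have := kc_le_insert ends A f
    rw [Finset.card_insert_of_notMem hf]
    omega

lemma kc_sdiff_le [DecidableEq E] {A : Finset E} :
    ∀ {S : Finset E}, S ⊆ A → kc ends (A \ S) ≤ kc ends A + S.card := by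
  intro S
  induction S using Finset.induction with
  | empty => intro _; simp
  | @insert e S he ih =>
    intro hS'
    have heA : e ∈ A := hS' (Finset.mem_insert_self e S)
    have hSA : S ⊆ A := fun x hx => hS' (Finset.mem_insert_of_mem hx)
    have hsplit : A \ S = insert e (A \ insert e S) := by
      ext x
      simp only [Finset.mem_sdiff, Finset.mem_insert, not_or]
      constructor
      · rintro ⟨hxA, hxS⟩
        by_cases hxe : x = e
        · exact Or.inl hxe
        · exact Or.inr ⟨hxA, hxe, hxS⟩
      · rintro (rfl | ⟨hxA, _, hxS⟩)
        · exact ⟨heA, he⟩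
        · exact ⟨hxA, hxS⟩
    have h1 : kc ends (A \ insert e S) ≤ kc ends (A \ S) + 1 := by
      rw [hsplit]; exact kc_le_insert ends _ e
    have h2 := ih hSA
    rw [Finset.card_insert_of_notMem he]
    omega

/-- For a forest, removing any subset of edges increases the number of components
by exactly the number of removed edges. -/
lemma kc_sdiff_forest {A S : Finset E} (hA : A.card + kc ends A = Fintype.card V)
    (hS : S ⊆ A) : kc ends (A \ S) = kc ends A + S.card := by
  refine le_antisymm (kc_sdiff_le ends hS) ?_
  have h1 := kc_ge ends (A \ S)
  have h2 := Finset.card_sdiff_add_card_eq_card hS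
  omega

/-- Every edge of a forest is a bridge. -/
lemma forest_bridge {A : Finset E} (hA : A.card + kc ends A = Fintype.card V)
    {e : E} (he : e ∈ A) {u v : V} (hu : ends e = s(u, v)) :
    ¬ Rch ends (A.erase e) u v := by
  intro hr
  have h1 : kc ends (A.erase e) = kc ends A + 1 := by
    rw [Finset.erase_eq]
    exact kc_sdiff_forest ends hA (Finset.singleton_subset_iff.2 he)
  have h2 : kc ends (insert e (A.erase e)) = kc ends (A.erase e) :=
    kc_insert_of_reach ends hu hr
  rw [Finset.insert_erase he] at h2
  omega

lemma erase_erase_comm (B : Finset E) (e e' : E) :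
    (B.erase e).erase e' = (B.erase e').erase e := by
  ext z
  simp only [Finset.mem_erase]
  tauto

/-- Two bridges: if `x, y` stay connected after deleting either one of them,
they stay connected after deleting both. -/
lemma two_bridges {B : Finset E} {e e' : E} {u v u' v' x y : V}
    (hee' : e ≠ e') (he : e ∈ B) (he' : e' ∈ B)
    (hu : ends e = s(u, v)) (hu' : ends e' = s(u', v'))
    (hbr : ¬ Rch ends (B.erase e) u v) (hbr' : ¬ Rch ends (B.erase e') u' v')
    (h1 : Rch ends (B.erase e) x y) (h2 : Rch ends (B.erase e') x y) :
    Rch ends ((B.erase e).erase e') x y := by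
  set H := (B.erase e).erase e' with hH
  have hunev : u ≠ v := fun h => hbr (h ▸ SimpleGraph.Reachable.refl u)
  have hsplit1 : B.erase e = insert e' H := by
    rw [hH, Finset.insert_erase (Finset.mem_erase.2 ⟨Ne.symm hee', he'⟩)]
  have hsplit2 : B.erase e' = insert e H := by
    rw [hH, erase_erase_comm B e e', Finset.insert_erase (Finset.mem_erase.2 ⟨hee', he⟩)]
  have hle : edgeGraph ends H ≤ edgeGraph ends (B.erase e') := by
    rw [hsplit2]; exact edgeGraph_mono ends (Finset.subset_insert e H)
  have hadj : (edgeGraph ends (B.erase e')).Adj u v := by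
    rw [hsplit2]; exact ⟨hunev, e, Finset.mem_insert_self e H, hu⟩
  rw [hsplit1] at h1
  rcases reach_insert ends hu' h1 with g1 | ⟨g2, g3⟩ | ⟨g2, g3⟩
  · exact g1
  · -- Rch H x u', Rch H v' y
    rw [hsplit2] at h2
    rcases reach_insert ends hu h2 with k1 | ⟨k2, k3⟩ | ⟨k2, k3⟩
    · exact k1
    · -- Rch H x u, Rch H v y : u' ~ x ~ u -e- v ~ y ~ v'
      exact absurd (((g2.symm.trans k2).mono hle).trans
        (hadj.reachable.trans ((k3.trans g3.symm).mono hle))) hbr'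
    · -- Rch H x v, Rch H u y
      exact absurd (((g2.symm.trans k2).mono hle).trans
        (hadj.symm.reachable.trans ((k3.trans g3.symm).mono hle))) hbr'
  · -- Rch H x v', Rch H u' y
    rw [hsplit2] at h2
    rcases reach_insert ends hu h2 with k1 | ⟨k2, k3⟩ | ⟨k2, k3⟩
    · exact k1
    · exact absurd ((((g3.trans k3.symm).mono hle).trans
        ((hadj.symm.reachable).trans ((k2.symm.trans g2).mono hle)))) hbr'
    · exact absurd ((((g3.trans k3.symm).mono hle).trans
        ((hadj.reachable).trans ((k2.symm.trans g2).mono hle)))) hbr'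


lemma key_bridges {x y : V} : ∀ (n : ℕ) (B S : Finset E), S.card = n → S ⊆ B →
    (∀ e ∈ B, ∀ u v : V, ends e = s(u, v) → ¬ Rch ends (B.erase e) u v) →
    (∀ e ∈ S, Rch ends (B.erase e) x y) → Rch ends B x y →
    Rch ends (B \ S) x y := by
  intro n
  induction n with
  | zero =>
    intro B S hcard _ _ _ hr
    rw [Finset.card_eq_zero.1 hcard]
    simpa using hr
  | succ n ih =>
    intro B S hcard hSB hbr hall hr
    obtain ⟨e, heS⟩ := Finset.card_pos.1 (by omega : 0 < S.card)
    have heB : e ∈ B := hSB heS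
    obtain ⟨u, v, hu⟩ := ends_exists ends e
    have hres : B \ S = (B.erase e) \ (S.erase e) := by
      ext z
      simp only [Finset.mem_sdiff, Finset.mem_erase]
      constructor
      · rintro ⟨hzB, hzS⟩
        exact ⟨⟨fun h => hzS (h ▸ heS), hzB⟩, fun h => hzS h.2⟩
      · rintro ⟨⟨hze, hzB⟩, hzS⟩
        exact ⟨hzB, fun h => hzS ⟨hze, h⟩⟩
    rw [hres]
    apply ih (B.erase e) (S.erase e) (by rw [Finset.card_erase_of_mem heS]; omega)
    · intro z hz
      rcases Finset.mem_erase.1 hz with ⟨hze, hzS⟩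
      exact Finset.mem_erase.2 ⟨hze, hSB hzS⟩
    · intro e' he' w w' hw hrw
      rcases Finset.mem_erase.1 he' with ⟨he'e, he'B⟩
      refine hbr e' he'B w w' hw (hrw.mono (edgeGraph_mono ends ?_))
      intro z hz
      rcases Finset.mem_erase.1 hz with ⟨hze', hzBe⟩
      exact Finset.mem_erase.2 ⟨hze', (Finset.mem_erase.1 hzBe).2⟩
    · intro e' he'
      rcases Finset.mem_erase.1 he' with ⟨he'e, he'S⟩
      obtain ⟨u', v', hu'⟩ := ends_exists ends e'
      exact two_bridges ends (Ne.symm he'e) heB (hSB he'S) hu hu'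
        (hbr e heB u v hu) (hbr e' (hSB he'S) u' v' hu')
        (hall e heS) (hall e' he'S)
    · exact hall e heS

/-- Each externally active edge has its endpoints connected in `Af \ Ai`. -/
lemma ext_edge_reach {Af Ai : Finset E} [Fintype E] [LinearOrder E]
    (hF : IsSpanningForest ends Af) (hi : Ai ⊆ intAct ends Af)
    {f : E} (hfa : ExternallyActive ends Af f) {x y : V} (hf : ends f = s(x, y)) :
    Rch ends (Af \ Ai) x y := by
  have hiAf : Ai ⊆ Af := fun e he => ((Finset.mem_filter.1 (hi he)).2).1
  have hfAf : f ∉ Af := hfa.1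
  -- endpoints are connected in the whole spanning forest
  have hreach : Rch ends Af x y := by
    by_contra hxy
    have h1 := kc_insert_of_not_reach ends hf hxy
    have h2 : kc ends (Finset.univ : Finset E) ≤ kc ends (insert f Af) :=
      kc_mono ends (Finset.subset_univ _)
    have := hF.2
    omega
  by_contra hnc
  -- some internally active edge separates x from y
  have : ¬ ∀ e ∈ Ai, Rch ends (Af.erase e) x y := by
    intro hall
    exact hnc (key_bridges ends Ai.card Af Ai rfl hiAf
      (fun e he u v hu => forest_bridge ends hF.1 he hu) hall hreach)
  push_neg at this
  obtain ⟨e, heAi, hesep⟩ := this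
  have heAf : e ∈ Af := hiAf heAi
  -- the swap is a spanning forest
  have hswap : IsSpanningForest ends (swapEdge Af e f) := by
    have hkerase : kc ends (Af.erase e) = kc ends Af + 1 := by
      rw [Finset.erase_eq]
      exact kc_sdiff_forest ends hF.1 (Finset.singleton_subset_iff.2 heAf)
    have hkins : kc ends (Af.erase e) = kc ends (insert f (Af.erase e)) + 1 :=
      kc_insert_of_not_reach ends hf hesep
    have hkc : kc ends (swapEdge Af e f) = kc ends Af := by
      rw [swapEdge]; omega
    have hfe : f ∉ Af.erase e := fun h => hfAf (Finset.mem_of_mem_erase h)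
    have hcard : (swapEdge Af e f).card = Af.card := by
      rw [swapEdge, Finset.card_insert_of_notMem hfe, Finset.card_erase_of_mem heAf]
      have : 0 < Af.card := Finset.card_pos.2 ⟨e, heAf⟩
      omega
    exact ⟨by rw [hcard, hkc]; exact hF.1, by rw [hkc]; exact hF.2⟩
  -- contradiction with activity
  have hia : InternallyActive ends Af e := (Finset.mem_filter.1 (hi heAi)).2
  rcases lt_trichotomy e f with hlt | heq | hgt
  · exact hia.2 ⟨f, hfAf, hlt, hswap⟩
  · exact hfAf (heq ▸ heAf)
  · exact hfa.2 ⟨e, heAf, hgt, hswap⟩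

/-- Adding edges whose endpoints are already connected does not change `kc`. -/
lemma kc_union_of_reach {B : Finset E} : ∀ (C : Finset E),
    (∀ f ∈ C, ∀ x y : V, ends f = s(x, y) → Rch ends B x y) →
    kc ends (B ∪ C) = kc ends B := by
  intro C
  induction C using Finset.induction with
  | empty => simp
  | @insert f C hfC ih =>
    intro hall
    have h1 : B ∪ insert f C = insert f (B ∪ C) := by
      ext z; simp only [Finset.mem_union, Finset.mem_insert]; tauto
    obtain ⟨x, y, hf⟩ := ends_exists ends f
    have hxy : Rch ends (B ∪ C) x y :=
      (hall f (Finset.mem_insert_self f C) x y hf).mono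
        (edgeGraph_mono ends Finset.subset_union_left)
    rw [h1, kc_insert_of_reach ends hf hxy,
      ih (fun g hg x y hgs => hall g (Finset.mem_insert_of_mem hg) x y hgs)]

end ActivityAux

/-- For `A = (A_f \ A_i) ∪ A_e`:
`|A_i| = k((V,A)) − k(G)` and `|A_e| = |A| − |V| + k((V,A))`
(stated in subtraction-free form). -/
theorem activity_counts {V E : Type} [Fintype V] [Fintype E] [DecidableEq E]
    [LinearOrder E] (ends : E → Sym2 V) (Af Ai Ae : Finset E)
    (hF : IsSpanningForest ends Af)
    (hi : Ai ⊆ intAct ends Af) (he : Ae ⊆ extAct ends Af) :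
    Ai.card + kc ends Finset.univ = kc ends ((Af \ Ai) ∪ Ae) ∧
    Ae.card + Fintype.card V = ((Af \ Ai) ∪ Ae).card + kc ends ((Af \ Ai) ∪ Ae) := by
  have hiAf : Ai ⊆ Af := fun e he' => ((Finset.mem_filter.1 (hi he')).2).1
  have heAct : ∀ f ∈ Ae, ExternallyActive ends Af f := fun f hf => (Finset.mem_filter.1 (he hf)).2
  have hkU : kc ends ((Af \ Ai) ∪ Ae) = kc ends (Af \ Ai) :=
    kc_union_of_reach ends Ae (fun f hf x y hfs => ext_edge_reach ends hF hi (heAct f hf) hfs)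
  have hkS : kc ends (Af \ Ai) = kc ends Af + Ai.card :=
    kc_sdiff_forest ends hF.1 hiAf
  have hdisj : Disjoint (Af \ Ai) Ae := by
    rw [Finset.disjoint_right]
    intro f hf hfd
    exact (heAct f hf).1 (Finset.mem_sdiff.1 hfd).1
  have hcardU : ((Af \ Ai) ∪ Ae).card = (Af \ Ai).card + Ae.card :=
    Finset.card_union_of_disjoint hdisj
  have hcardS := Finset.card_sdiff_add_card_eq_card hiAf
  have h1 := hF.1
  have h2 := hF.2
  constructor <;> omega
end

section
/- Let G = (V, E) be a graph with a linear order < on E. Then the Tutte polynomial, defined as T(G, x, y) = Σ_{F spanning forest of G} x^{i(F)} y^{e(F)}, equals the edge-subset sum Σ_{A ⊆ E} (x−1)^{k(G[A]) − k(G)} (y−1)^{|A| − |V| + k(G[A])}, where G[A] denotes the spanning subgraph (V, A) and k the number of connected components. -/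
open Finset

attribute [local instance] Classical.propDecidable

namespace TutteAux

variable {V E : Type} [DecidableEq E]

/-- reachability within edge subset -/
abbrev Reach (ends : E → Sym2 V) (S : Finset E) (a b : V) : Prop :=
  (edgeGraph ends S).Reachable a b

variable {ends : E → Sym2 V}

lemma edgeGraph_mono {S T : Finset E} (h : S ⊆ T) : edgeGraph ends S ≤ edgeGraph ends T := by
  rintro a b ⟨hab, e, he, hs⟩; exact ⟨hab, e, h he, hs⟩

lemma reach_mono {S T : Finset E} (h : S ⊆ T) {a b : V} (hr : Reach ends S a b) :
    Reach ends T a b := hr.mono (edgeGraph_mono h)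

lemma reach_adj {S : Finset E} {e : E} {a b : V} (he : e ∈ S) (h : ends e = s(a, b))
    (hab : a ≠ b) : Reach ends S a b := SimpleGraph.Adj.reachable ⟨hab, e, he, h⟩

lemma ends_exists (ends : E → Sym2 V) (e : E) : ∃ p q, ends e = s(p, q) := by
  obtain ⟨⟨p, q⟩, h⟩ := Quot.exists_rep (ends e)
  exact ⟨p, q, h.symm⟩

lemma reach_insert_iff {S : Finset E} {f : E} {p q : V} (hf : ends f = s(p, q)) {a b : V} :
    Reach ends (insert f S) a b ↔
      Reach ends S a b ∨ (Reach ends S a p ∧ Reach ends S q b) ∨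
        (Reach ends S a q ∧ Reach ends S p b) := by
  constructor
  · intro h
    obtain ⟨w⟩ := h
    induction w with
    | nil => exact Or.inl (SimpleGraph.Reachable.refl _)
    | @cons a c b hadj w ih =>
      have comb : ∀ {x y z : V}, Reach ends S x y →
          (Reach ends S y z ∨ (Reach ends S y p ∧ Reach ends S q z) ∨
            (Reach ends S y q ∧ Reach ends S p z)) →
          (Reach ends S x z ∨ (Reach ends S x p ∧ Reach ends S q z) ∨
            (Reach ends S x q ∧ Reach ends S p z)) := by
        rintro x y z hxy (h | ⟨h1, h2⟩ | ⟨h1, h2⟩)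
        · exact Or.inl (hxy.trans h)
        · exact Or.inr (Or.inl ⟨hxy.trans h1, h2⟩)
        · exact Or.inr (Or.inr ⟨hxy.trans h1, h2⟩)
      obtain ⟨hac, i, hi, hsi⟩ := hadj
      rcases Finset.mem_insert.1 hi with rfl | hiS
      · rw [hf] at hsi
        rcases Sym2.eq_iff.1 hsi with ⟨rfl, rfl⟩ | ⟨rfl, rfl⟩
        · rcases ih with h | ⟨h1, h2⟩ | ⟨h1, h2⟩
          · exact Or.inr (Or.inl ⟨SimpleGraph.Reachable.refl _, h⟩)
          · exact Or.inl (h1.symm.trans h2)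
          · exact Or.inl h2
        · rcases ih with h | ⟨h1, h2⟩ | ⟨h1, h2⟩
          · exact Or.inr (Or.inr ⟨SimpleGraph.Reachable.refl _, h⟩)
          · exact Or.inl h2
          · exact Or.inl (h1.symm.trans h2)
      · exact comb (SimpleGraph.Adj.reachable ⟨hac, i, hiS, hsi⟩) ih
  · have hsub : S ⊆ insert f S := Finset.subset_insert f S
    rintro (h | ⟨h1, h2⟩ | ⟨h1, h2⟩)
    · exact reach_mono hsub h
    · by_cases hpq : p = q
      · exact reach_mono hsub ((h1.trans (hpq ▸ h2)))
      · exact (reach_mono hsub h1).trans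
          ((reach_adj (Finset.mem_insert_self f S) hf hpq).trans (reach_mono hsub h2))
    · by_cases hpq : q = p
      · exact reach_mono hsub ((h1.trans (hpq ▸ h2)))
      · exact (reach_mono hsub h1).trans
          ((reach_adj (Finset.mem_insert_self f S) (by rw [hf, Sym2.eq_swap]) hpq).trans
            (reach_mono hsub h2))

/-- if the endpoints of `f` are reachable in `S`, inserting `f` changes nothing -/
lemma reach_insert_eq {S : Finset E} {f : E}
    (h : ∀ p q : V, ends f = s(p, q) → Reach ends S p q) {a b : V} :
    Reach ends (insert f S) a b ↔ Reach ends S a b := by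
  obtain ⟨p, q, hf⟩ := ends_exists ends f
  rw [reach_insert_iff hf]
  constructor
  · rintro (h' | ⟨h1, h2⟩ | ⟨h1, h2⟩)
    · exact h'
    · exact (h1.trans (h p q hf)).trans h2
    · exact (h1.trans (h p q hf).symm).trans h2
  · exact Or.inl

lemma reach_union_eq {S T : Finset E}
    (h : ∀ f ∈ T, ∀ p q : V, ends f = s(p, q) → Reach ends S p q) {a b : V} :
    Reach ends (S ∪ T) a b ↔ Reach ends S a b := by
  classical
  induction T using Finset.induction with
  | empty => rw [Finset.union_empty]
  | @insert g T hg ih =>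
    have hT : ∀ f ∈ T, ∀ p q : V, ends f = s(p, q) → Reach ends S p q :=
      fun f hf => h f (Finset.mem_insert_of_mem hf)
    rw [Finset.union_insert,
      reach_insert_eq (fun p q hgp => reach_mono Finset.subset_union_left
        (h g (Finset.mem_insert_self g T) p q hgp)), ih hT]

end TutteAux
namespace TutteAux
set_option linter.unusedSectionVars false

variable {V E : Type} [Fintype V] [DecidableEq E] {ends : E → Sym2 V}

/-- map on connected components induced by implication of reachability -/
def ccMap {S T : Finset E} (h : ∀ a b : V, Reach ends S a b → Reach ends T a b) :
    (edgeGraph ends S).ConnectedComponent → (edgeGraph ends T).ConnectedComponent :=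
  Quot.lift (fun v => (edgeGraph ends T).connectedComponentMk v)
    (fun a b hr => SimpleGraph.ConnectedComponent.sound (h a b hr))

lemma ccMap_mk {S T : Finset E} (h : ∀ a b : V, Reach ends S a b → Reach ends T a b) (v : V) :
    ccMap h ((edgeGraph ends S).connectedComponentMk v) =
      (edgeGraph ends T).connectedComponentMk v := rfl

lemma ccMap_surjective {S T : Finset E}
    (h : ∀ a b : V, Reach ends S a b → Reach ends T a b) :
    Function.Surjective (ccMap h) := by
  intro c
  obtain ⟨v, rfl⟩ := Quot.exists_rep c
  exact ⟨(edgeGraph ends S).connectedComponentMk v, rfl⟩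

lemma kc_le_of_imp {S T : Finset E} (h : ∀ a b : V, Reach ends S a b → Reach ends T a b) :
    kc ends T ≤ kc ends S :=
  Nat.card_le_card_of_surjective (ccMap h) (ccMap_surjective h)

lemma kc_eq_of_iff {S T : Finset E} (h : ∀ a b : V, Reach ends S a b ↔ Reach ends T a b) :
    kc ends S = kc ends T :=
  le_antisymm (kc_le_of_imp (fun a b => (h a b).mpr)) (kc_le_of_imp (fun a b => (h a b).mp))

lemma kc_le_of_subset {S T : Finset E} (hst : S ⊆ T) : kc ends T ≤ kc ends S :=
  kc_le_of_imp (fun _ _ => reach_mono hst)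

/-- if moreover the component counts agree, reachability agrees -/
lemma reach_iff_of_kc_le {S T : Finset E}
    (h : ∀ a b : V, Reach ends S a b → Reach ends T a b)
    (hk : kc ends S ≤ kc ends T) {a b : V} : Reach ends T a b ↔ Reach ends S a b := by
  haveI : Finite (edgeGraph ends S).ConnectedComponent := Quot.finite _
  have hb : Function.Bijective (ccMap h) :=
    (Nat.bijective_iff_surjective_and_card (ccMap h)).mpr
      ⟨ccMap_surjective h, le_antisymm hk (kc_le_of_imp h)⟩
  constructor
  · intro hr
    have : ccMap h ((edgeGraph ends S).connectedComponentMk a) =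
        ccMap h ((edgeGraph ends S).connectedComponentMk b) := by
      rw [ccMap_mk, ccMap_mk]
      exact SimpleGraph.ConnectedComponent.sound hr
    exact SimpleGraph.ConnectedComponent.exact (hb.injective this)
  · exact h a b

lemma reach_iff_of_subset_kc {S T : Finset E} (hst : S ⊆ T) (hk : kc ends S ≤ kc ends T)
    {a b : V} : Reach ends T a b ↔ Reach ends S a b :=
  reach_iff_of_kc_le (fun _ _ => reach_mono hst) hk

/-- strictness : merging two components strictly decreases the count -/
lemma kc_lt_of_imp {S T : Finset E} (h : ∀ a b : V, Reach ends S a b → Reach ends T a b)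
    {a b : V} (hT : Reach ends T a b) (hS : ¬ Reach ends S a b) : kc ends T < kc ends S := by
  rcases lt_or_ge (kc ends T) (kc ends S) with h' | h'
  · exact h'
  · exact absurd ((reach_iff_of_kc_le h h').mp hT) hS

/-- the key counting lemma : inserting an edge between two distinct components -/
lemma kc_insert_of_not_reach {S : Finset E} {f : E} {p q : V} (hf : ends f = s(p, q))
    (h : ¬ Reach ends S p q) : kc ends (insert f S) + 1 = kc ends S := by
  set G := edgeGraph ends S with hG
  set G' := edgeGraph ends (insert f S) with hG'
  have himp : ∀ a b : V, Reach ends S a b → Reach ends (insert f S) a b :=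
    fun _ _ => reach_mono (Finset.subset_insert f S)
  have hpq : p ≠ q := by rintro rfl; exact h (SimpleGraph.Reachable.refl p)
  -- the restriction of ccMap to components different from that of q is a bijection
  set ψ : {c : G.ConnectedComponent // ¬ c = G.connectedComponentMk q} →
      G'.ConnectedComponent := fun c => ccMap himp c.1 with hψ
  have hinj : Function.Injective ψ := by
    rintro ⟨c₁, h₁⟩ ⟨c₂, h₂⟩ hcc
    simp only [Subtype.mk_eq_mk]
    revert h₁ h₂ hcc
    refine SimpleGraph.ConnectedComponent.ind₂ (fun u v => ?_) c₁ c₂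
    intro h₁ h₂ hcc
    simp only [hψ, ccMap_mk] at hcc
    have hr : Reach ends (insert f S) u v := SimpleGraph.ConnectedComponent.exact hcc
    rcases (reach_insert_iff hf).1 hr with h' | ⟨h1, h2⟩ | ⟨h1, h2⟩
    · exact SimpleGraph.ConnectedComponent.sound h'
    · exact absurd (SimpleGraph.ConnectedComponent.sound h2.symm) h₂
    · exact absurd (SimpleGraph.ConnectedComponent.sound h1) h₁
  have hsurj : Function.Surjective ψ := by
    intro c
    obtain ⟨w, rfl⟩ := Quot.exists_rep c
    show ∃ c', ψ c' = G'.connectedComponentMk w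
    by_cases hw : Reach ends S w q
    · refine ⟨⟨G.connectedComponentMk p, ?_⟩, ?_⟩
      · intro hc
        exact h (SimpleGraph.ConnectedComponent.exact hc)
      · simp only [hψ, ccMap_mk]
        refine SimpleGraph.ConnectedComponent.sound ?_
        exact ((reach_adj (Finset.mem_insert_self f S) hf hpq)).trans
          (reach_mono (Finset.subset_insert f S) hw.symm)
    · refine ⟨⟨G.connectedComponentMk w, ?_⟩, rfl⟩
      intro hc
      exact hw (SimpleGraph.ConnectedComponent.exact hc)
  haveI : Finite G.ConnectedComponent := Quot.finite _
  haveI : Finite G'.ConnectedComponent := Quot.finite _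
  haveI : Unique {c : G.ConnectedComponent // c = G.connectedComponentMk q} := by
    refine ⟨⟨⟨G.connectedComponentMk q, rfl⟩⟩, ?_⟩
    rintro ⟨c, hc⟩
    exact Subtype.ext hc
  have hsplit : Nat.card G.ConnectedComponent =
      1 + Nat.card {c : G.ConnectedComponent // ¬ c = G.connectedComponentMk q} := by
    rw [← Nat.card_congr (Equiv.sumCompl (fun c => c = G.connectedComponentMk q)),
      Nat.card_sum, Nat.card_unique]
  have hcard : Nat.card {c : G.ConnectedComponent // ¬ c = G.connectedComponentMk q} =
      Nat.card G'.ConnectedComponent := Nat.card_congr (Equiv.ofBijective ψ ⟨hinj, hsurj⟩)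
  show Nat.card G'.ConnectedComponent + 1 = Nat.card G.ConnectedComponent
  omega

lemma kc_empty : kc ends (∅ : Finset E) = Fintype.card V := by
  have hbot : edgeGraph ends (∅ : Finset E) = ⊥ := by
    ext a b
    simp [edgeGraph]
  have : ∀ a b : V, Reach ends (∅ : Finset E) a b ↔ a = b := by
    intro a b
    show (edgeGraph ends (∅ : Finset E)).Reachable a b ↔ _
    rw [hbot, SimpleGraph.reachable_bot]
  have hb : Function.Bijective (edgeGraph ends (∅ : Finset E)).connectedComponentMk := by
    constructor
    · intro a b hab
      exact (this a b).1 (SimpleGraph.ConnectedComponent.exact hab)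
    · intro c; obtain ⟨v, rfl⟩ := Quot.exists_rep c; exact ⟨v, rfl⟩
  rw [kc, ← Nat.card_congr (Equiv.ofBijective _ hb), Nat.card_eq_fintype_card]

end TutteAux
namespace TutteAux
set_option linter.unusedSectionVars false

variable {V E : Type} [Fintype V] [DecidableEq E] {ends : E → Sym2 V}

lemma reach_of_reach_other {S : Finset E} {p q p' q' : V} (h : s(p, q) = (s(p', q') : Sym2 V))
    (hr : Reach ends S p q) : Reach ends S p' q' := by
  rcases Sym2.eq_iff.1 h with ⟨rfl, rfl⟩ | ⟨rfl, rfl⟩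
  · exact hr
  · exact hr.symm

lemma kc_le_insert_add_one {S : Finset E} (f : E) : kc ends S ≤ kc ends (insert f S) + 1 := by
  by_cases hr : ∀ p q : V, ends f = s(p, q) → Reach ends S p q
  · rw [kc_eq_of_iff (fun a b => (reach_insert_eq hr (a := a) (b := b)).symm)]
    exact Nat.le_succ _
  · push_neg at hr
    obtain ⟨p, q, hf, hnr⟩ := hr
    exact le_of_eq (kc_insert_of_not_reach hf hnr).symm

lemma kc_subset_le {S T : Finset E} (hts : T ⊆ S) : kc ends T ≤ kc ends S + (S \ T).card := by
  generalize hn : (S \ T).card = n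
  induction n generalizing T with
  | zero =>
    have : S \ T = ∅ := Finset.card_eq_zero.1 hn
    have hST : T = S := Finset.Subset.antisymm hts (fun x hx => by
      by_contra hxT
      exact absurd (Finset.mem_sdiff.2 ⟨hx, hxT⟩) (by simp [this]))
    simp [hST]
  | succ n ih =>
    have hne : (S \ T).Nonempty := Finset.card_pos.1 (by omega)
    obtain ⟨g, hg⟩ := hne
    obtain ⟨hgS, hgT⟩ := Finset.mem_sdiff.1 hg
    have h1 : insert g T ⊆ S := Finset.insert_subset hgS hts
    have h2 : S \ insert g T = (S \ T).erase g := by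
      ext x; simp only [Finset.mem_sdiff, Finset.mem_erase, Finset.mem_insert]; tauto
    have h3 : (S \ insert g T).card = n := by
      rw [h2, Finset.card_erase_of_mem hg, hn]
      omega
    have := ih h1 h3
    have := kc_le_insert_add_one (ends := ends) (S := T) g
    omega

lemma card_add_kc_ge (S : Finset E) : Fintype.card V ≤ S.card + kc ends S := by
  induction S using Finset.induction with
  | empty => simp [kc_empty]
  | @insert f S hf ih =>
    have := kc_le_insert_add_one (ends := ends) (S := S) f
    rw [Finset.card_insert_of_notMem hf]
    omega

/-- `(V, S)` is a forest -/
def Forest (ends : E → Sym2 V) [Fintype V] (S : Finset E) : Prop :=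
  S.card + kc ends S = Fintype.card V

lemma Forest.subset {S T : Finset E} (hts : T ⊆ S) (hS : Forest ends S) : Forest ends T := by
  have h1 := kc_subset_le (ends := ends) hts
  have h2 := Finset.card_sdiff_add_card_eq_card hts
  have h3 := card_add_kc_ge (ends := ends) T
  unfold Forest at *
  omega

lemma Forest.not_reach_erase {S : Finset E} (hS : Forest ends S) {g : E} (hg : g ∈ S)
    {p q : V} (hpq : ends g = s(p, q)) : ¬ Reach ends (S.erase g) p q := by
  intro hr
  have hiff : ∀ a b : V, Reach ends S a b ↔ Reach ends (S.erase g) a b := by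
    intro a b
    conv_lhs => rw [← Finset.insert_erase hg]
    exact reach_insert_eq (fun p' q' h' => reach_of_reach_other (hpq ▸ h') hr)
  have hkc : kc ends S = kc ends (S.erase g) := kc_eq_of_iff hiff
  have h1 : Forest ends (S.erase g) := hS.subset (Finset.erase_subset g S)
  have h2 := Finset.card_erase_add_one hg
  unfold Forest at *
  omega

end TutteAux

namespace TutteAux
set_option linter.unusedSectionVars false

variable {V E : Type} [Fintype E] [DecidableEq E] [LinearOrder E]

/-- auxiliary ranks -/
noncomputable def rkBelow (e : E) : ℕ := (Finset.univ.filter (· < e)).card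
noncomputable def rkAbove (e : E) : ℕ := (Finset.univ.filter (e < ·)).card

lemma rkBelow_strictMono : StrictMono (rkBelow (E := E)) := by
  intro a b hab
  refine Finset.card_lt_card ⟨fun x hx => ?_, fun hsub => ?_⟩
  · simp only [Finset.mem_filter, Finset.mem_univ, true_and] at hx ⊢
    exact hx.trans hab
  · have := hsub (Finset.mem_filter.2 ⟨Finset.mem_univ a, hab⟩)
    simp only [Finset.mem_filter, Finset.mem_univ, true_and] at this
    exact lt_irrefl a this

lemma rkAbove_strictAnti : StrictAnti (rkAbove (E := E)) := by
  intro a b hab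
  refine Finset.card_lt_card ⟨fun x hx => ?_, fun hsub => ?_⟩
  · simp only [Finset.mem_filter, Finset.mem_univ, true_and] at hx ⊢
    exact hab.trans hx
  · have := hsub (Finset.mem_filter.2 ⟨Finset.mem_univ b, hab⟩)
    simp only [Finset.mem_filter, Finset.mem_univ, true_and] at this
    exact lt_irrefl b this

lemma rkBelow_lt_card (e : E) : rkBelow e < Fintype.card E := by
  rw [← Finset.card_univ]
  refine Finset.card_lt_card ⟨Finset.subset_univ _, fun hsub => ?_⟩
  have := hsub (Finset.mem_univ e)
  simp only [Finset.mem_filter, Finset.mem_univ, true_and] at this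
  exact lt_irrefl e this

/-- weight realising the order : edges of `A` in increasing order, then the others
in decreasing order -/
noncomputable def wA (A : Finset E) (e : E) : ℕ :=
  if e ∈ A then rkBelow e else Fintype.card E + rkAbove e

lemma wA_lt_iff (A : Finset E) (f e : E) :
    wA A f < wA A e ↔
      ((f ∈ A ∧ e ∉ A) ∨ (f ∈ A ∧ e ∈ A ∧ f < e) ∨ (f ∉ A ∧ e ∉ A ∧ e < f)) := by
  unfold wA
  by_cases hf : f ∈ A <;> by_cases he : e ∈ A
  · simp only [hf, he, if_pos, not_true, and_false, false_and, and_true, true_and,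
      false_or, or_false]
    exact rkBelow_strictMono.lt_iff_lt
  · simp only [hf, he, if_pos, if_neg, not_false_iff, and_true, true_and, not_true,
      and_false, false_and, or_false, false_or, iff_true]
    have := rkBelow_lt_card f
    omega
  · simp only [hf, he, if_pos, if_neg, not_true, and_false, false_and, and_true,
      not_false_iff, true_and, or_false, false_or, iff_false, not_lt]
    have := rkBelow_lt_card e
    omega
  · simp only [hf, he, if_neg, not_false_iff, and_true, true_and, not_true, and_false,
      false_and, false_or, Nat.add_lt_add_iff_left]
    exact rkAbove_strictAnti.lt_iff_gt

lemma wA_injective (A : Finset E) : Function.Injective (wA A) := by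
  intro a b hab
  by_contra hne
  have h1 : wA A a < wA A b ∨ wA A b < wA A a := by
    rcases lt_trichotomy a b with h | h | h
    · rcases em (a ∈ A) with ha | ha <;> rcases em (b ∈ A) with hb | hb
      · exact Or.inl ((wA_lt_iff A a b).2 (Or.inr (Or.inl ⟨ha, hb, h⟩)))
      · exact Or.inl ((wA_lt_iff A a b).2 (Or.inl ⟨ha, hb⟩))
      · exact Or.inr ((wA_lt_iff A b a).2 (Or.inl ⟨hb, ha⟩))
      · exact Or.inr ((wA_lt_iff A b a).2 (Or.inr (Or.inr ⟨hb, ha, h⟩)))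
    · exact absurd h hne
    · rcases em (a ∈ A) with ha | ha <;> rcases em (b ∈ A) with hb | hb
      · exact Or.inr ((wA_lt_iff A b a).2 (Or.inr (Or.inl ⟨hb, ha, h⟩)))
      · exact Or.inl ((wA_lt_iff A a b).2 (Or.inl ⟨ha, hb⟩))
      · exact Or.inr ((wA_lt_iff A b a).2 (Or.inl ⟨hb, ha⟩))
      · exact Or.inl ((wA_lt_iff A a b).2 (Or.inr (Or.inr ⟨ha, hb, h⟩)))
  omega

/-- the set of edges preceding `e` in the order associated with `A` -/
noncomputable def prefSet (A : Finset E) (e : E) : Finset E :=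
  Finset.univ.filter (fun f => wA A f < wA A e)

lemma mem_prefSet {A : Finset E} {f e : E} :
    f ∈ prefSet A e ↔
      ((f ∈ A ∧ e ∉ A) ∨ (f ∈ A ∧ e ∈ A ∧ f < e) ∨ (f ∉ A ∧ e ∉ A ∧ e < f)) := by
  rw [prefSet, Finset.mem_filter, wA_lt_iff]
  simp

lemma not_mem_prefSet_self (A : Finset E) (e : E) : e ∉ prefSet A e := by
  simp [prefSet]

end TutteAux
namespace TutteAux
set_option linter.unusedSectionVars false

variable {V E : Type} [Fintype V] [Fintype E] [DecidableEq E] [LinearOrder E]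

/-- the canonical spanning forest associated with an edge subset `A` :
greedily, an edge is kept iff its endpoints are not joined by earlier edges -/
noncomputable def phi (ends : E → Sym2 V) (A : Finset E) : Finset E :=
  Finset.univ.filter
    (fun e => ∀ p q : V, ends e = s(p, q) → ¬ Reach ends (prefSet A e) p q)

variable {ends : E → Sym2 V}

lemma mem_phi {A : Finset E} {e : E} :
    e ∈ phi ends A ↔ ∀ p q : V, ends e = s(p, q) → ¬ Reach ends (prefSet A e) p q := by
  simp [phi]

lemma not_mem_phi {A : Finset E} {e : E} :
    e ∉ phi ends A ↔ ∀ p q : V, ends e = s(p, q) → Reach ends (prefSet A e) p q := by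
  constructor
  · intro h p q hpq
    rw [mem_phi] at h
    push_neg at h
    obtain ⟨p', q', h1, h2⟩ := h
    exact reach_of_reach_other (h1.symm.trans hpq) h2
  · intro h hmem
    obtain ⟨p, q, hpq⟩ := ends_exists ends e
    exact (mem_phi.1 hmem) p q hpq (h p q hpq)

/-- the fundamental property of the greedy construction : within any downward closed
set of edges, connectivity is realised by the edges of `phi` -/
lemma reach_eq_inter_phi (A : Finset E) :
    ∀ S : Finset E, (∀ e ∈ S, prefSet A e ⊆ S) →
      ∀ a b : V, Reach ends S a b ↔ Reach ends (S ∩ phi ends A) a b := by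
  intro S
  induction S using Finset.strongInduction with
  | _ S ih =>
    intro hdc a b
    rcases S.eq_empty_or_nonempty with rfl | hne
    · simp
    obtain ⟨e, heS, hemax⟩ := Finset.exists_max_image S (wA A) hne
    have hss : S.erase e ⊂ S := Finset.erase_ssubset heS
    have hdc' : ∀ f ∈ S.erase e, prefSet A f ⊆ S.erase e := by
      intro f hf g hg
      obtain ⟨hfe, hfS⟩ := Finset.mem_erase.1 hf
      have hgS : g ∈ S := hdc f hfS hg
      have hwg : wA A g < wA A f := by
        simpa [prefSet] using hg
      refine Finset.mem_erase.2 ⟨?_, hgS⟩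
      rintro rfl
      have h1 := hemax f hfS
      omega
    have hS' := ih (S.erase e) hss hdc'
    by_cases hph : e ∈ phi ends A
    · obtain ⟨p, q, hpq⟩ := ends_exists ends e
      rw [← Finset.insert_erase heS, Finset.insert_inter_of_mem hph]
      simp only [reach_insert_iff hpq, hS']
    · have hpre : prefSet A e ⊆ S.erase e := by
        intro g hg
        refine Finset.mem_erase.2 ⟨?_, hdc e heS hg⟩
        rintro rfl
        simp [prefSet] at hg
      have hre : ∀ p q : V, ends e = s(p, q) → Reach ends (S.erase e) p q := by
        intro p q hpq
        exact reach_mono hpre ((not_mem_phi.1 hph) p q hpq)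
      rw [← Finset.insert_erase heS, Finset.insert_inter_of_notMem hph,
        reach_insert_eq hre]
      exact hS' a b

/-- sets all whose edges have disconnected endpoints among earlier edges are forests -/
lemma card_add_kc_of_indep (A : Finset E) :
    ∀ T : Finset E,
      (∀ e ∈ T, ∀ p q : V, ends e = s(p, q) → ¬ Reach ends (T ∩ prefSet A e) p q) →
      T.card + kc ends T = Fintype.card V := by
  intro T
  induction T using Finset.strongInduction with
  | _ T ih =>
    intro hT
    rcases T.eq_empty_or_nonempty with rfl | hne
    · simpa using kc_empty
    obtain ⟨e, heT, hemax⟩ := Finset.exists_max_image T (wA A) hne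
    have hsub : T.erase e ⊆ T ∩ prefSet A e := by
      intro f hf
      obtain ⟨hfe, hfT⟩ := Finset.mem_erase.1 hf
      refine Finset.mem_inter.2 ⟨hfT, ?_⟩
      simp only [prefSet, Finset.mem_filter, Finset.mem_univ, true_and]
      exact lt_of_le_of_ne (hemax f hfT) (fun hh => hfe (wA_injective A hh))
    obtain ⟨p, q, hpq⟩ := ends_exists ends e
    have hnr : ¬ Reach ends (T.erase e) p q :=
      fun hr => hT e heT p q hpq (reach_mono hsub hr)
    have hkc : kc ends (insert e (T.erase e)) + 1 = kc ends (T.erase e) :=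
      kc_insert_of_not_reach hpq hnr
    rw [Finset.insert_erase heT] at hkc
    have hcount := ih (T.erase e) (Finset.erase_ssubset heT) (by
      intro f hf p' q' hpq' hr
      exact hT f (Finset.mem_of_mem_erase hf) p' q' hpq'
        (reach_mono (Finset.inter_subset_inter (Finset.erase_subset e T)
          (Finset.Subset.refl _)) hr))
    have hc := Finset.card_erase_add_one heT
    omega

lemma subset_phi_indep {A T : Finset E} (hT : T ⊆ phi ends A) :
    ∀ e ∈ T, ∀ p q : V, ends e = s(p, q) → ¬ Reach ends (T ∩ prefSet A e) p q :=
  fun e he p q hpq hr =>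
    (mem_phi.1 (hT he)) p q hpq (reach_mono Finset.inter_subset_right hr)

lemma forest_of_subset_phi {A T : Finset E} (hT : T ⊆ phi ends A) : Forest ends T :=
  card_add_kc_of_indep A T (subset_phi_indep hT)

lemma reach_univ_iff_phi (A : Finset E) {a b : V} :
    Reach ends (Finset.univ : Finset E) a b ↔ Reach ends (phi ends A) a b := by
  have := reach_eq_inter_phi (ends := ends) A Finset.univ
    (fun e _ => Finset.subset_univ _) a b
  rwa [Finset.univ_inter] at this

lemma reach_A_iff_inter_phi (A : Finset E) {a b : V} :
    Reach ends A a b ↔ Reach ends (A ∩ phi ends A) a b := by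
  refine reach_eq_inter_phi (ends := ends) A A ?_ a b
  intro e he g hg
  rcases mem_prefSet.1 hg with ⟨h1, h2⟩ | ⟨h1, _⟩ | ⟨_, h2, _⟩
  · exact absurd he h2
  · exact h1
  · exact absurd he h2

lemma kc_univ_eq_phi (A : Finset E) :
    kc ends (Finset.univ : Finset E) = kc ends (phi ends A) :=
  kc_eq_of_iff (fun _ _ => reach_univ_iff_phi A)

lemma phi_spanningForest (A : Finset E) : IsSpanningForest ends (phi ends A) :=
  ⟨forest_of_subset_phi (Finset.Subset.refl _), (kc_univ_eq_phi A).symm⟩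

lemma kc_A_eq (A : Finset E) :
    kc ends A + (A ∩ phi ends A).card = Fintype.card V := by
  have h1 : kc ends A = kc ends (A ∩ phi ends A) :=
    kc_eq_of_iff (fun _ _ => reach_A_iff_inter_phi A)
  have h2 : Forest ends (A ∩ phi ends A) :=
    forest_of_subset_phi Finset.inter_subset_right
  unfold Forest at h2
  omega

end TutteAux
namespace TutteAux
set_option linter.unusedSectionVars false

variable {V E : Type} [Fintype V] [Fintype E] [DecidableEq E] [LinearOrder E] {ends : E → Sym2 V}

lemma exists_minimal_reach {S : Finset E} {a b : V} (h : Reach ends S a b) :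
    ∃ T, T ⊆ S ∧ Reach ends T a b ∧ ∀ g ∈ T, ¬ Reach ends (T.erase g) a b := by
  induction S using Finset.strongInduction with
  | _ S ih =>
    by_cases hex : ∃ g ∈ S, Reach ends (S.erase g) a b
    · obtain ⟨g, hg, hr⟩ := hex
      obtain ⟨T, h1, h2, h3⟩ := ih (S.erase g) (Finset.erase_ssubset hg) hr
      exact ⟨T, h1.trans (Finset.erase_subset g S), h2, h3⟩
    · push_neg at hex
      exact ⟨S, Finset.Subset.refl S, h, hex⟩

lemma minimal_reach_not_erase {B T : Finset E} (hB : Forest ends B) (hTB : T ⊆ B)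
    {a b : V} (hT : Reach ends T a b) (hmin : ∀ g ∈ T, ¬ Reach ends (T.erase g) a b)
    {g : E} (hg : g ∈ T) : ¬ Reach ends (B.erase g) a b := by
  intro hr
  obtain ⟨g1, g2, hg12⟩ := ends_exists ends g
  have hTe : T.erase g ⊆ B.erase g := Finset.erase_subset_erase g hTB
  have hd : Reach ends (insert g (T.erase g)) a b := by
    rw [Finset.insert_erase hg]; exact hT
  rcases (reach_insert_iff hg12).1 hd with h' | ⟨h1, h2⟩ | ⟨h1, h2⟩
  · exact hmin g hg h'
  · exact hB.not_reach_erase (hTB hg) hg12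
      (((reach_mono hTe h1).symm.trans hr).trans (reach_mono hTe h2).symm)
  · exact hB.not_reach_erase (hTB hg) hg12
      (((reach_mono hTe h2).trans hr.symm).trans (reach_mono hTe h1))

lemma reach_univ_iff_of_spanning {B : Finset E} (hB : IsSpanningForest ends B) {a b : V} :
    Reach ends (Finset.univ : Finset E) a b ↔ Reach ends B a b :=
  reach_iff_of_subset_kc (Finset.subset_univ B) (le_of_eq hB.2)

lemma swap_spanning_iff {B : Finset E} (hB : IsSpanningForest ends B) {g f : E}
    (hg : g ∈ B) (hf : f ∉ B) {p q : V} (hfp : ends f = s(p, q)) :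
    IsSpanningForest ends (insert f (B.erase g)) ↔ ¬ Reach ends (B.erase g) p q := by
  have hforest : Forest ends B := hB.1
  have hcardD : (insert f (B.erase g)).card = B.card := by
    rw [Finset.card_insert_of_notMem (fun hh => hf (Finset.mem_of_mem_erase hh))]
    have := Finset.card_erase_add_one hg
    omega
  constructor
  · intro hsf hr
    have hDr : ∀ a b : V, Reach ends (insert f (B.erase g)) a b ↔
        Reach ends (B.erase g) a b :=
      fun a b => reach_insert_eq (fun p' q' h' => reach_of_reach_other (hfp ▸ h') hr)
    have hkcD : kc ends (insert f (B.erase g)) = kc ends (B.erase g) := kc_eq_of_iff hDr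
    have hFe : Forest ends (B.erase g) := hforest.subset (Finset.erase_subset g B)
    have h1 := hsf.1
    have h2 := hsf.2
    have h3 := hB.1
    have h4 := hB.2
    have h5 := Finset.card_erase_add_one hg
    unfold Forest at hFe
    omega
  · intro hnr
    have hne : p ≠ q := by rintro rfl; exact hnr (SimpleGraph.Reachable.refl p)
    have hRB : Reach ends B p q :=
      (reach_univ_iff_of_spanning hB).1 (reach_adj (Finset.mem_univ f) hfp hne)
    obtain ⟨g1, g2, hg12⟩ := ends_exists ends g
    have hRB' : Reach ends (insert g (B.erase g)) p q := by
      rw [Finset.insert_erase hg]; exact hRB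
    have hBe : B.erase g ⊆ insert f (B.erase g) := Finset.subset_insert _ _
    have hadj : Reach ends (insert f (B.erase g)) p q :=
      reach_adj (Finset.mem_insert_self f _) hfp hne
    have hDg : Reach ends (insert f (B.erase g)) g1 g2 := by
      rcases (reach_insert_iff hg12).1 hRB' with h' | ⟨h1, h2⟩ | ⟨h1, h2⟩
      · exact absurd h' hnr
      · exact ((reach_mono hBe h1).symm.trans hadj).trans (reach_mono hBe h2).symm
      · exact ((reach_mono hBe h2).trans hadj.symm).trans (reach_mono hBe h1)
    have hBD : ∀ a b : V, Reach ends B a b → Reach ends (insert f (B.erase g)) a b := by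
      intro a b hab
      have h1 : Reach ends (insert g (insert f (B.erase g))) a b := by
        refine reach_mono ?_ hab
        intro x hx
        by_cases hxg : x = g
        · exact hxg ▸ Finset.mem_insert_self x (insert f (B.erase x))
        · exact Finset.mem_insert_of_mem
            (Finset.mem_insert_of_mem (Finset.mem_erase.2 ⟨hxg, hx⟩))
      exact (reach_insert_eq (fun p' q' h' =>
        reach_of_reach_other (hg12 ▸ h') hDg)).1 h1
    have hiff : ∀ a b : V, Reach ends (Finset.univ : Finset E) a b ↔
        Reach ends (insert f (B.erase g)) a b := by
      intro a b
      constructor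
      · intro h
        exact hBD a b ((reach_univ_iff_of_spanning hB).1 h)
      · exact reach_mono (Finset.subset_univ _)
    have hkcD : kc ends (Finset.univ : Finset E) = kc ends (insert f (B.erase g)) :=
      kc_eq_of_iff hiff
    have h3 := hB.1
    have h4 := hB.2
    exact ⟨by omega, by omega⟩

lemma internallyActive_iff {B : Finset E} (hB : IsSpanningForest ends B) {e : E}
    (he : e ∈ B) :
    InternallyActive ends B e ↔ ∀ f, f ∉ B → e < f →
      ∀ p q : V, ends f = s(p, q) → Reach ends (B.erase e) p q := by
  unfold InternallyActive swapEdge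
  simp only [he, true_and]
  constructor
  · intro h f hf hef p q hpq
    by_contra hnr
    exact h ⟨f, hf, hef, (swap_spanning_iff hB he hf hpq).2 hnr⟩
  · rintro h ⟨f, hf, hef, hsf⟩
    obtain ⟨p, q, hpq⟩ := ends_exists ends f
    exact (swap_spanning_iff hB he hf hpq).1 hsf (h f hf hef p q hpq)

lemma externallyActive_iff {B : Finset E} (hB : IsSpanningForest ends B) {f : E}
    (hf : f ∉ B) :
    ExternallyActive ends B f ↔ ∀ e ∈ B, f < e →
      ∀ p q : V, ends f = s(p, q) → Reach ends (B.erase e) p q := by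
  unfold ExternallyActive swapEdge
  simp only [hf, not_false_iff, true_and]
  constructor
  · intro h e he hfe p q hpq
    by_contra hnr
    exact h ⟨e, he, hfe, (swap_spanning_iff hB he hf hpq).2 hnr⟩
  · rintro h ⟨e, he, hfe, hsf⟩
    obtain ⟨p, q, hpq⟩ := ends_exists ends f
    exact (swap_spanning_iff hB he hf hpq).1 hsf (h e he hfe p q hpq)

end TutteAux
namespace TutteAux
set_option linter.unusedSectionVars false

variable {V E : Type} [Fintype V] [Fintype E] [DecidableEq E] [LinearOrder E] {ends : E → Sym2 V}

lemma mem_intAct {B : Finset E} {g : E} :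
    g ∈ intAct ends B ↔ InternallyActive ends B g := by simp [intAct]

lemma mem_extAct {B : Finset E} {g : E} :
    g ∈ extAct ends B ↔ ExternallyActive ends B g := by simp [extAct]

lemma prefSet_downward {A : Finset E} {e : E} :
    ∀ x ∈ prefSet A e, prefSet A x ⊆ prefSet A e := by
  intro x hx g hg
  simp only [prefSet, Finset.mem_filter, Finset.mem_univ, true_and] at hx hg ⊢
  omega

/-- edges of `phi A` outside `A` are internally active -/
lemma intAct_of_phi {A : Finset E} {e : E} (he : e ∈ phi ends A) (heA : e ∉ A) :
    InternallyActive ends (phi ends A) e := by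
  rw [internallyActive_iff (phi_spanningForest A) he]
  intro f hf hef p q hpq
  have hre : Reach ends (prefSet A f) p q := (not_mem_phi.1 hf) p q hpq
  have hre2 : Reach ends (prefSet A f ∩ phi ends A) p q :=
    (reach_eq_inter_phi A (prefSet A f) prefSet_downward p q).1 hre
  refine reach_mono ?_ hre2
  intro g hg
  obtain ⟨hg1, hg2⟩ := Finset.mem_inter.1 hg
  refine Finset.mem_erase.2 ⟨?_, hg2⟩
  rintro rfl
  rcases mem_prefSet.1 hg1 with ⟨h1, _⟩ | ⟨h1, _⟩ | ⟨_, _, h3⟩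
  · exact heA h1
  · exact heA h1
  · exact absurd hef (not_lt.2 h3.le)

/-- edges of `A` outside `phi A` are externally active -/
lemma extAct_of_phi {A : Finset E} {f : E} (hf : f ∉ phi ends A) (hfA : f ∈ A) :
    ExternallyActive ends (phi ends A) f := by
  rw [externallyActive_iff (phi_spanningForest A) hf]
  intro e he hfe p q hpq
  have hre : Reach ends (prefSet A f) p q := (not_mem_phi.1 hf) p q hpq
  have hre2 : Reach ends (prefSet A f ∩ phi ends A) p q :=
    (reach_eq_inter_phi A (prefSet A f) prefSet_downward p q).1 hre
  refine reach_mono ?_ hre2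
  intro g hg
  obtain ⟨hg1, hg2⟩ := Finset.mem_inter.1 hg
  refine Finset.mem_erase.2 ⟨?_, hg2⟩
  rintro rfl
  rcases mem_prefSet.1 hg1 with ⟨_, h2⟩ | ⟨_, _, h3⟩ | ⟨_, h2, _⟩
  · exact h2 hfA
  · exact absurd hfe (not_lt.2 h3.le)
  · exact h2 hfA

/-- uniqueness : any subset in the activity interval of a spanning forest `B`
has canonical forest `B` -/
lemma phi_eq_of_interval {B I Ex : Finset E} (hB : IsSpanningForest ends B)
    (hI : I ⊆ intAct ends B) (hEx : Ex ⊆ extAct ends B) :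
    phi ends ((B \ I) ∪ Ex) = B := by
  set A := (B \ I) ∪ Ex with hA
  have hIB : I ⊆ B := fun g hg => (mem_intAct.1 (hI hg)).1
  have hExB : ∀ g ∈ Ex, g ∉ B := fun g hg => (mem_extAct.1 (hEx hg)).1
  have hmemA : ∀ g, g ∈ A ↔ ((g ∈ B ∧ g ∉ I) ∨ g ∈ Ex) := by
    intro g; simp only [hA, Finset.mem_union, Finset.mem_sdiff]
  ext e
  constructor
  · -- e ∈ phi A → e ∈ B
    intro he
    by_contra heB
    -- e ∉ B : we show its endpoints are joined within `prefSet A e`, contradiction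
    obtain ⟨p, q, hpq⟩ := ends_exists ends e
    by_cases hpq' : p = q
    · exact (mem_phi.1 he) p q hpq (hpq' ▸ SimpleGraph.Reachable.refl p)
    have hRB : Reach ends B p q :=
      (reach_univ_iff_of_spanning hB).1 (reach_adj (Finset.mem_univ e) hpq hpq')
    obtain ⟨T, hTB, hTr, hTmin⟩ := exists_minimal_reach hRB
    have hTpref : T ⊆ prefSet A e := by
      intro g hg
      have hgB : g ∈ T → g ∈ B := fun h => hTB h
      have hgB' : g ∈ B := hTB hg
      have hge : e ≠ g := fun h => heB (h ▸ hgB')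
      have hng : ¬ Reach ends (B.erase g) p q :=
        minimal_reach_not_erase hB.1 hTB hTr hTmin hg
      by_cases hgA : g ∈ A
      · by_cases heA : e ∈ A
        · -- e ∈ Ex : externally active
          have hEx_e : ExternallyActive ends B e := by
            rcases (hmemA e).1 heA with ⟨h1, _⟩ | h2
            · exact absurd h1 heB
            · exact mem_extAct.1 (hEx h2)
          have hord : ¬ e < g := by
            intro hlt
            exact hng (((externallyActive_iff hB heB).1 hEx_e) g hgB' hlt p q hpq)
          have hgl : g < e := lt_of_le_of_ne (not_lt.1 hord) (Ne.symm hge)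
          exact mem_prefSet.2 (Or.inr (Or.inl ⟨hgA, heA, hgl⟩))
        · exact mem_prefSet.2 (Or.inl ⟨hgA, heA⟩)
      · -- g ∈ I : internally active
        have hgI : g ∈ I := by
          by_contra hgI
          exact hgA ((hmemA g).2 (Or.inl ⟨hgB', hgI⟩))
        have hIA_g : InternallyActive ends B g := mem_intAct.1 (hI hgI)
        have hord : ¬ g < e := by
          intro hlt
          exact hng (((internallyActive_iff hB hgB').1 hIA_g) e heB hlt p q hpq)
        have hel : e < g := lt_of_le_of_ne (not_lt.1 hord) hge
        have heA : e ∉ A := by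
          intro heA
          have hEx_e : ExternallyActive ends B e := by
            rcases (hmemA e).1 heA with ⟨h1, _⟩ | h2
            · exact absurd h1 heB
            · exact mem_extAct.1 (hEx h2)
          exact hng (((externallyActive_iff hB heB).1 hEx_e) g hgB' hel p q hpq)
        exact mem_prefSet.2 (Or.inr (Or.inr ⟨hgA, heA, hel⟩))
    exact (mem_phi.1 he) p q hpq (reach_mono hTpref hTr)
  · -- e ∈ B → e ∈ phi A
    intro heB
    rw [mem_phi]
    intro p q hpq hr
    have hcond : ∀ f ∈ prefSet A e \ B.erase e, ∀ p' q' : V, ends f = s(p', q') →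
        Reach ends (B.erase e) p' q' := by
      intro f hf p' q' hf'
      obtain ⟨hf1, hf2⟩ := Finset.mem_sdiff.1 hf
      have hfe : f ≠ e := fun h => not_mem_prefSet_self A e (h ▸ hf1)
      have hfB : f ∉ B := fun h => hf2 (Finset.mem_erase.2 ⟨hfe, h⟩)
      have hfEx : f ∈ A → f ∈ Ex := by
        intro hfA
        rcases (hmemA f).1 hfA with ⟨h1, _⟩ | h2
        · exact absurd h1 hfB
        · exact h2
      rcases mem_prefSet.1 hf1 with ⟨h1, h2⟩ | ⟨h1, _, h3⟩ | ⟨h1, h2, h3⟩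
      · -- f ∈ A, e ∉ A : e is internally active ; compare f and e
        have heI : e ∈ I := by
          by_contra heI
          exact h2 ((hmemA e).2 (Or.inl ⟨heB, heI⟩))
        have hIA_e : InternallyActive ends B e := mem_intAct.1 (hI heI)
        rcases lt_trichotomy f e with hlt | heq | hlt
        · exact ((externallyActive_iff hB hfB).1 (mem_extAct.1 (hEx (hfEx h1)))) e heB
            hlt p' q' hf'
        · exact absurd heq hfe
        · exact ((internallyActive_iff hB heB).1 hIA_e) f hfB hlt p' q' hf'
      · -- f ∈ A, e ∈ A, f < e : f externally active
        exact ((externallyActive_iff hB hfB).1 (mem_extAct.1 (hEx (hfEx h1)))) e heB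
          h3 p' q' hf'
      · -- f ∉ A, e ∉ A, e < f : e internally active
        have heI : e ∈ I := by
          by_contra heI
          exact h2 ((hmemA e).2 (Or.inl ⟨heB, heI⟩))
        exact ((internallyActive_iff hB heB).1 (mem_intAct.1 (hI heI))) f hfB h3 p' q' hf'
    have hr2 : Reach ends (B.erase e ∪ (prefSet A e \ B.erase e)) p q :=
      reach_mono (fun x hx => by
        by_cases hxB : x ∈ B.erase e
        · exact Finset.mem_union_left _ hxB
        · exact Finset.mem_union_right _ (Finset.mem_sdiff.2 ⟨hx, hxB⟩)) hr
    have hr3 : Reach ends (B.erase e) p q := (reach_union_eq hcond).1 hr2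
    have hF : Forest ends B := hB.1
    exact hF.not_reach_erase heB hpq hr3

end TutteAux
namespace TutteAux
set_option linter.unusedSectionVars false

variable {V E : Type} [Fintype V] [Fintype E] [DecidableEq E] [LinearOrder E] {ends : E → Sym2 V}

lemma exponents (A : Finset E) :
    kc ends A - kc ends Finset.univ = (phi ends A \ A).card ∧
      A.card + kc ends A - Fintype.card V = (A \ phi ends A).card := by
  have h1 : kc ends A + (A ∩ phi ends A).card = Fintype.card V := kc_A_eq A
  have h2 : Forest ends (phi ends A) := forest_of_subset_phi (Finset.Subset.refl _)
  have h3 : kc ends (Finset.univ : Finset E) = kc ends (phi ends A) := kc_univ_eq_phi A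
  have h4 : (phi ends A \ A).card + (phi ends A ∩ A).card = (phi ends A).card :=
    Finset.card_sdiff_add_card_inter _ _
  have h5 : (A \ phi ends A).card + (A ∩ phi ends A).card = A.card :=
    Finset.card_sdiff_add_card_inter _ _
  have h6 : (phi ends A ∩ A).card = (A ∩ phi ends A).card := by rw [Finset.inter_comm]
  unfold Forest at h2
  omega

lemma sum_pow_powerset (s : Finset E) (r : ℝ) :
    ∑ I ∈ s.powerset, r ^ I.card = (r + 1) ^ s.card := by
  induction s using Finset.induction with
  | empty => simp
  | @insert a s ha ih =>
    rw [Finset.sum_powerset_insert ha]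
    have h2 : ∑ t ∈ s.powerset, r ^ (insert a t).card = r * ∑ t ∈ s.powerset, r ^ t.card := by
      rw [Finset.mul_sum]
      refine Finset.sum_congr rfl (fun t ht => ?_)
      rw [Finset.card_insert_of_notMem (fun h => ha (Finset.mem_powerset.1 ht h)), pow_succ]
      ring
    rw [h2, ih, Finset.card_insert_of_notMem ha, pow_succ]
    ring

end TutteAux

/-- The Tutte polynomial (spanning-forest expansion with activities)
equals the edge-subset (Whitney rank) expansion. -/
theorem tutte_edge_subset_expansion {V E : Type} [Fintype V] [Fintype E] [DecidableEq E]
    [LinearOrder E] (ends : E → Sym2 V) (x y : ℝ) :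
    ∑ F ∈ Finset.univ.powerset.filter (IsSpanningForest ends),
        x ^ (intAct ends F).card * y ^ (extAct ends F).card =
      ∑ A ∈ (Finset.univ : Finset E).powerset,
        (x - 1) ^ (kc ends A - kc ends Finset.univ) *
          (y - 1) ^ (A.card + kc ends A - Fintype.card V) := by
  open TutteAux in
  have hrw : ∀ A : Finset E,
      (x - 1) ^ (kc ends A - kc ends Finset.univ) *
        (y - 1) ^ (A.card + kc ends A - Fintype.card V) =
      (x - 1) ^ (phi ends A \ A).card * (y - 1) ^ (A \ phi ends A).card := by
    intro A
    obtain ⟨h1, h2⟩ := TutteAux.exponents (ends := ends) A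
    rw [h1, h2]
  rw [Finset.sum_congr rfl (fun A _ => hrw A)]
  conv_rhs => rw [← Finset.sum_fiberwise_of_maps_to
    (g := TutteAux.phi ends) (t := Finset.univ.powerset.filter (IsSpanningForest ends))
    (fun A _ => Finset.mem_filter.2
      ⟨Finset.mem_powerset.2 (Finset.subset_univ _), TutteAux.phi_spanningForest A⟩)]
  refine Finset.sum_congr rfl (fun B hBmem => ?_)
  have hBsf : IsSpanningForest ends B := (Finset.mem_filter.1 hBmem).2
  have hIsub : ∀ g ∈ intAct ends B, g ∈ B :=
    fun g hg => (TutteAux.mem_intAct.1 hg).1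
  have hExsub : ∀ g ∈ extAct ends B, g ∉ B :=
    fun g hg => (TutteAux.mem_extAct.1 hg).1
  have hbij : ∑ A ∈ Finset.univ.powerset.filter (fun A => TutteAux.phi ends A = B),
      (x - 1) ^ (TutteAux.phi ends A \ A).card * (y - 1) ^ (A \ TutteAux.phi ends A).card =
      ∑ p ∈ (intAct ends B).powerset ×ˢ (extAct ends B).powerset,
        (x - 1) ^ p.1.card * (y - 1) ^ p.2.card := by
    refine Finset.sum_bij' (fun A _ => (B \ A, A \ B))
      (fun p _ => (B \ p.1) ∪ p.2) ?_ ?_ ?_ ?_ ?_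
    · -- maps into the product of powersets
      intro A hA
      have hphi : TutteAux.phi ends A = B := (Finset.mem_filter.1 hA).2
      refine Finset.mem_product.2 ⟨Finset.mem_powerset.2 ?_, Finset.mem_powerset.2 ?_⟩
      · intro g hg
        obtain ⟨hgB, hgA⟩ := Finset.mem_sdiff.1 hg
        have h1 : g ∈ TutteAux.phi ends A := hphi.symm ▸ hgB
        have h2 := intAct_of_phi h1 hgA
        rw [hphi] at h2
        exact TutteAux.mem_intAct.2 h2
      · intro g hg
        obtain ⟨hgA, hgB⟩ := Finset.mem_sdiff.1 hg
        have h1 : g ∉ TutteAux.phi ends A := fun hh => hgB (hphi ▸ hh)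
        have h2 := extAct_of_phi h1 hgA
        rw [hphi] at h2
        exact TutteAux.mem_extAct.2 h2
    · -- inverse maps into the fiber
      intro p hp
      obtain ⟨hp1, hp2⟩ := Finset.mem_product.1 hp
      refine Finset.mem_filter.2 ⟨Finset.mem_powerset.2 (Finset.subset_univ _), ?_⟩
      exact TutteAux.phi_eq_of_interval hBsf (Finset.mem_powerset.1 hp1)
        (Finset.mem_powerset.1 hp2)
    · -- left inverse
      intro A hA
      ext g
      simp only [Finset.mem_union, Finset.mem_sdiff]
      tauto
    · -- right inverse
      intro p hp
      obtain ⟨hp1, hp2⟩ := Finset.mem_product.1 hp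
      have h1 : ∀ g ∈ p.1, g ∈ B := fun g hg => hIsub g (Finset.mem_powerset.1 hp1 hg)
      have h2 : ∀ g ∈ p.2, g ∉ B := fun g hg => hExsub g (Finset.mem_powerset.1 hp2 hg)
      have e1 : B \ ((B \ p.1) ∪ p.2) = p.1 := by
        ext g
        simp only [Finset.mem_union, Finset.mem_sdiff]
        constructor
        · rintro ⟨hgB, hg⟩
          push_neg at hg
          exact (hg.1 hgB)
        · intro hg
          exact ⟨h1 g hg, fun hh => by
            rcases hh with ⟨_, h⟩ | h
            · exact h hg
            · exact h2 g h (h1 g hg)⟩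
      have e2 : ((B \ p.1) ∪ p.2) \ B = p.2 := by
        ext g
        simp only [Finset.mem_union, Finset.mem_sdiff]
        constructor
        · rintro ⟨hg | hg, hgB⟩
          · exact absurd hg.1 hgB
          · exact hg
        · intro hg
          exact ⟨Or.inr hg, h2 g hg⟩
      rw [Prod.ext_iff]
      exact ⟨e1, e2⟩
    · -- summands agree
      intro A hA
      have hphi : TutteAux.phi ends A = B := (Finset.mem_filter.1 hA).2
      rw [hphi]
  rw [hbij, Finset.sum_product]
  dsimp only
  rw [← Finset.sum_mul_sum, TutteAux.sum_pow_powerset,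
    TutteAux.sum_pow_powerset, sub_add_cancel, sub_add_cancel]
end
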